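/- For every concurrent epistemic game structure M, every agent a, every set of states P ⊆ St, and every state q: if q belongs to the least fixpoint of the monotone operator X ↦ K_a P ∪ ⟨{a}⟩X, then M,q ⊨ ⟨⟨{a}⟩⟩◇P. (Singleton-coalition case of the lower bound μZ.(E_A φ ∨ ⟨A⟩Z) for ⟨⟨A⟩⟩◇φ.) -/

import Mathlib

/-- A concurrent epistemic game structure (iCGS). -/
structure CEGS where
  Agt : Type
  St : Type
  AP : Type
  Act : Type
  agtFin : Finite Agt
  agtNe : Nonempty Agt
  stNe : Nonempty St
  actFin : Finite Act
  actNe : Nonempty Act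
  V : AP → Set St
  d : Agt → St → Set Act
  d_ne : ∀ a q, (d a q).Nonempty
  o : St → (Agt → Act) → St
  sim : Agt → St → St → Prop
  sim_equiv : ∀ a, Equivalence (sim a)
  uniform : ∀ a q q', sim a q q' → d a q = d a q'

namespace CEGS

variable (M : CEGS)

/-- An action profile available at state `q`. -/
def Avail (q : M.St) (α : M.Agt → M.Act) : Prop := ∀ a, α a ∈ M.d a q

/-- A path: an infinite sequence of states, each next state being the outcome of
some available action profile. -/
def IsPath (lam : ℕ → M.St) : Prop :=
  ∀ i, ∃ α, M.Avail (lam i) α ∧ lam (i + 1) = M.o (lam i) α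

/-- `s` is a collective ir-strategy (uniform, memoryless) for coalition `A`. -/
def IsIrStrat (A : Set M.Agt) (s : M.Agt → M.St → M.Act) : Prop :=
  ∀ a ∈ A, (∀ q, s a q ∈ M.d a q) ∧ (∀ q q', M.sim a q q' → s a q = s a q')

/-- `s` is a collective Ir-strategy (perfect information, memoryless) for coalition `A`. -/
def IsIrStratPI (A : Set M.Agt) (s : M.Agt → M.St → M.Act) : Prop :=
  ∀ a ∈ A, ∀ q, s a q ∈ M.d a q

/-- `lam ∈ out(q, s_A)`: a path starting at `q` along which every agent of `A` plays `s`. -/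
def InOut (A : Set M.Agt) (s : M.Agt → M.St → M.Act) (q : M.St) (lam : ℕ → M.St) : Prop :=
  lam 0 = q ∧ ∀ i, ∃ α, M.Avail (lam i) α ∧ (∀ a ∈ A, α a = s a (lam i)) ∧
    lam (i + 1) = M.o (lam i) α

/-- `lam ∈ out^ir(q, s_A) = ⋃_{a∈A} ⋃_{q ∼_a q'} out(q', s_A)`. -/
def InOutIr (A : Set M.Agt) (s : M.Agt → M.St → M.Act) (q : M.St) (lam : ℕ → M.St) : Prop :=
  ∃ a ∈ A, ∃ q', M.sim a q q' ∧ M.InOut A s q' lam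

/-- The "everybody knows" relation `∼_A^E = ⋃_{a∈A} ∼_a`. -/
def simE (A : Set M.Agt) (q q' : M.St) : Prop := ∃ a ∈ A, M.sim a q q'

/-- The "common knowledge" relation `∼_A^C`: transitive closure of `∼_A^E`. -/
def simC (A : Set M.Agt) : M.St → M.St → Prop := Relation.TransGen (M.simE A)

/-- Individual knowledge: `K_a X`. -/
def Know (a : M.Agt) (X : Set M.St) : Set M.St := {q | ∀ q', M.sim a q q' → q' ∈ X}

/-- Mutual knowledge: `E_A X`. -/
def EKnow (A : Set M.Agt) (X : Set M.St) : Set M.St := {q | ∀ q', M.simE A q q' → q' ∈ X}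

/-- Common knowledge: `C_A X`. -/
def CKnow (A : Set M.Agt) (X : Set M.St) : Set M.St := {q | ∀ q', M.simC A q q' → q' ∈ X}

/-- Next-step operator `⟨A⟩X` (imperfect information). -/
def Next (A : Set M.Agt) (X : Set M.St) : Set M.St :=
  {q | ∃ s, M.IsIrStrat A s ∧ ∀ lam, M.InOutIr A s q lam → lam 1 ∈ X}

/-- `Reach_M(s_A, Q, X)`. -/
def ReachSet (A : Set M.Agt) (s : M.Agt → M.St → M.Act) (Q X : Set M.St) : Set M.St :=
  {q | q ∈ Q ∧ ∀ lam, M.InOut A s q lam → ∃ i, lam i ∈ X ∧ ∀ j < i, lam j ∈ Q}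

/-- Steadfast next-step operator `⟨A⟩•X`. -/
def NextStead (A : Set M.Agt) (X : Set M.St) : Set M.St :=
  {q | ∃ s, M.IsIrStrat A s ∧
    M.ReachSet A s {q' | M.simC A q q'} X = {q' | M.simC A q q'}}

/-- `M,q ⊨ ⟨⟨A⟩⟩◇P` (ATLir reachability, ir-strategies). -/
def CanReach (A : Set M.Agt) (P : Set M.St) (q : M.St) : Prop :=
  ∃ s, M.IsIrStrat A s ∧ ∀ lam, M.InOutIr A s q lam → ∃ i, lam i ∈ P

/-- `M,q ⊨ ⟨⟨A⟩⟩□P` (ATLir safety, ir-strategies). -/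
def CanGlobally (A : Set M.Agt) (P : Set M.St) (q : M.St) : Prop :=
  ∃ s, M.IsIrStrat A s ∧ ∀ lam, M.InOutIr A s q lam → ∀ i, lam i ∈ P

/-- `M,q ⊨ ⟨⟨A⟩⟩ S U P` (ATLir until, ir-strategies). -/
def CanUntil (A : Set M.Agt) (S P : Set M.St) (q : M.St) : Prop :=
  ∃ s, M.IsIrStrat A s ∧ ∀ lam, M.InOutIr A s q lam →
    ∃ i, lam i ∈ P ∧ ∀ j < i, lam j ∈ S

/-- Perfect-information next-step operator `N^Ir_A(X)`. -/
def NextPI (A : Set M.Agt) (X : Set M.St) : Set M.St :=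
  {q | ∃ t, M.IsIrStratPI A t ∧ ∀ lam, M.InOut A t q lam → lam 1 ∈ X}

/-- Perfect-information "globally" operator `G^Ir_A(X)`. -/
def GloballyPI (A : Set M.Agt) (X : Set M.St) : Set M.St :=
  {q | ∃ t, M.IsIrStratPI A t ∧ ∀ lam, M.InOut A t q lam → ∀ i, lam i ∈ X}

/-- Perfect-information "until" operator `U^Ir_A(Y, X)`. -/
def UntilPI (A : Set M.Agt) (Y X : Set M.St) : Set M.St :=
  {q | ∃ t, M.IsIrStratPI A t ∧ ∀ lam, M.InOut A t q lam →
    ∃ i, lam i ∈ X ∧ ∀ j < i, lam j ∈ Y}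

end CEGS

/-- Knaster–Tarski least fixpoint of a set operator. -/
def lfpSet {σ : Type} (f : Set σ → Set σ) : Set σ := sInf {X | f X ⊆ X}

/-- Knaster–Tarski greatest fixpoint of a set operator. -/
def gfpSet {σ : Type} (f : Set σ → Set σ) : Set σ := sSup {X | X ⊆ f X}

namespace SFLBAux

open OrdinalApprox

variable (M : CEGS) (a : M.Agt) (P : Set M.St)

/-- The operator `X ↦ K_a P ∪ ⟨{a}⟩X` as an order hom. -/
def F : Set M.St →o Set M.St :=
  ⟨fun X => M.Know a P ∪ M.Next {a} X, by
    intro X Y hXY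
    apply Set.union_subset_union_right
    rintro q ⟨s, hs, hlam⟩
    exact ⟨s, hs, fun lam h => hXY (hlam lam h)⟩⟩

/-- Ordinal approximants of the least fixpoint. -/
def approx (α : Ordinal) : Set M.St := lfpApprox (F M a P) ⊥ α

/-- A set closed under `∼_a`. -/
def SimCl (X : Set M.St) : Prop := ∀ q q', M.sim a q q' → q ∈ X → q' ∈ X

lemma simCl_know : SimCl M a (M.Know a P) := by
  intro q q' hqq' hq q'' hq''
  exact hq q'' ((M.sim_equiv a).trans hqq' hq'')

lemma simCl_next (X : Set M.St) : SimCl M a (M.Next {a} X) := by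
  rintro q q' hqq' ⟨s, hs, hl⟩
  refine ⟨s, hs, ?_⟩
  rintro lam ⟨b, hb, q'', hsim, hout⟩
  rcases hb with rfl
  exact hl lam ⟨b, rfl, q'', (M.sim_equiv b).trans hqq' hsim, hout⟩

lemma simCl_F (X : Set M.St) : SimCl M a (F M a P X) := by
  rintro q q' hqq' (hq | hq)
  · exact Or.inl (simCl_know M a P q q' hqq' hq)
  · exact Or.inr (simCl_next M a X q q' hqq' hq)

lemma simCl_approx (α : Ordinal) : SimCl M a (approx M a P α) := by
  intro q q' hqq' hq
  rw [approx, lfpApprox] at hq ⊢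
  simp only [bot_sup_eq, Set.iSup_eq_iUnion, Set.mem_iUnion] at hq ⊢
  obtain ⟨β, hβ, hqT⟩ := hq
  exact ⟨β, hβ, simCl_F M a P _ q q' hqq' hqT⟩

/-- Rank of a state: least ordinal at which it appears in the approximants. -/
noncomputable def rank (q : M.St) : Ordinal := sInf {α : Ordinal | q ∈ approx M a P α}

/-- The ordinal at which the approximation stabilises. -/
noncomputable def bigOrd : Ordinal := Cardinal.ord (Order.succ (Cardinal.mk (Set M.St)))

/-- The least fixpoint. -/
def Lfp : Set M.St := lfpSet (fun X => M.Know a P ∪ M.Next {a} X)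

lemma lfp_eq : Lfp M a P = approx M a P (bigOrd M) := by
  rw [approx, bigOrd, lfpApprox_ord_eq_lfp]
  rfl

lemma rank_inv {q q' : M.St} (h : M.sim a q q') : rank M a P q = rank M a P q' := by
  unfold rank
  congr 1
  ext α
  exact ⟨fun hq => simCl_approx M a P α q q' h hq,
    fun hq => simCl_approx M a P α q' q ((M.sim_equiv a).symm h) hq⟩

lemma mem_approx_rank {q : M.St} (hq : q ∈ Lfp M a P) : q ∈ approx M a P (rank M a P q) := by
  have hne : {α : Ordinal | q ∈ approx M a P α}.Nonempty :=
    ⟨bigOrd M, show q ∈ approx M a P (bigOrd M) by rw [← lfp_eq]; exact hq⟩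
  exact csInf_mem hne

lemma rank_le {q : M.St} {α : Ordinal} (hq : q ∈ approx M a P α) : rank M a P q ≤ α :=
  csInf_le (OrderBot.bddBelow _) hq

lemma approx_subset_lfp {α : Ordinal} (hα : α ≤ bigOrd M) :
    approx M a P α ⊆ Lfp M a P := by
  rw [lfp_eq]
  exact lfpApprox_mono_right (f := F M a P) (x := ⊥) hα

lemma rank_le_bigOrd {q : M.St} (hq : q ∈ Lfp M a P) : rank M a P q ≤ bigOrd M :=
  rank_le M a P (by rw [← lfp_eq]; exact hq)

/-- Each state of the fixpoint not in `K_a P` admits a strategy whose one-step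
outcomes land strictly lower in the approximation hierarchy. -/
def H (r : M.St) : Prop :=
  ∃ β < rank M a P r, ∃ s, M.IsIrStrat {a} s ∧
    ∀ lam, M.InOutIr {a} s r lam → lam 1 ∈ approx M a P β

lemma h_holds {r : M.St} (hr : r ∈ Lfp M a P) (hnk : r ∉ M.Know a P) : H M a P r := by
  have hmem := mem_approx_rank M a P hr
  rw [approx, lfpApprox] at hmem
  simp only [bot_sup_eq, Set.iSup_eq_iUnion, Set.mem_iUnion] at hmem
  obtain ⟨β, hβ, hrT⟩ := hmem
  rcases hrT with hrT | ⟨s, hs, hl⟩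
  · exact absurd hrT hnk
  · exact ⟨β, hβ, s, hs, fun lam h => hl lam h⟩

/-- The setoid of `∼_a`. -/
def sa : Setoid M.St := ⟨M.sim a, M.sim_equiv a⟩

/-- A canonical representative of the `∼_a`-class of a state. -/
noncomputable def rep (q : M.St) : M.St := (Quotient.mk (sa M a) q).out

lemma sim_rep (q : M.St) : M.sim a (rep M a q) q :=
  Quotient.exact (Quotient.out_eq (Quotient.mk (sa M a) q))

lemma rep_eq {q q' : M.St} (h : M.sim a q q') : rep M a q = rep M a q' :=
  congrArg Quotient.out (Quotient.sound h)

open Classical in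
/-- The chosen one-step strategy at (the class of) `r`. -/
noncomputable def chosen (r : M.St) : M.Agt → M.St → M.Act :=
  if h : H M a P r then h.choose_spec.2.choose
  else fun _ q => (M.d_ne a (rep M a q)).choose

lemma chosen_irStrat (r : M.St) : M.IsIrStrat {a} (chosen M a P r) := by
  unfold chosen
  split
  case isTrue h => exact h.choose_spec.2.choose_spec.1
  case isFalse h =>
    rintro b rfl
    constructor
    · intro q
      have := (M.d_ne b (rep M b q)).choose_spec
      show _ ∈ M.d b q
      rw [← M.uniform b _ _ (sim_rep M b q)]
      exact this
    · intro q q' hqq'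
      simp only [rep_eq M b hqq']

lemma chosen_spec {r : M.St} (h : H M a P r) :
    ∀ lam, M.InOutIr {a} (chosen M a P r) r lam →
      lam 1 ∈ approx M a P h.choose := by
  unfold chosen
  rw [dif_pos h]
  exact h.choose_spec.2.choose_spec.2

/-- The global uniform strategy: at each state, play the strategy chosen for its class. -/
noncomputable def sGlobal : M.Agt → M.St → M.Act :=
  fun _ q => chosen M a P (rep M a q) a q

lemma sGlobal_irStrat : M.IsIrStrat {a} (sGlobal M a P) := by
  rintro b rfl
  constructor
  · intro q
    exact ((chosen_irStrat M b P (rep M b q)) b rfl).1 q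
  · intro q q' hqq'
    unfold sGlobal
    rw [rep_eq M b hqq']
    exact ((chosen_irStrat M b P (rep M b q')) b rfl).2 q q' hqq'

/-- Extension of a path: `x0`, then `x1`, then iterate `g`. -/
def extPath (g : M.St → M.St) (x0 x1 : M.St) : ℕ → M.St
  | 0 => x0
  | 1 => x1
  | (n + 2) => g (extPath g x0 x1 (n + 1))

/-- Main induction: every state of rank `≤ α` in the fixpoint is good for `sGlobal`. -/
lemma main (α : Ordinal) : ∀ q, q ∈ Lfp M a P → rank M a P q ≤ α →
    ∀ lam, M.InOutIr {a} (sGlobal M a P) q lam → ∃ i, lam i ∈ P := by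
  classical
  induction α using Ordinal.induction with
  | h α IH =>
    rintro q hq hrk lam ⟨b, hb, q₀, hsim, h0, hstep⟩
    rcases hb with rfl
    by_cases hknow : q₀ ∈ M.Know b P
    · exact ⟨0, h0 ▸ hknow q₀ ((M.sim_equiv b).refl q₀)⟩
    · -- set up the representative and its chosen strategy
      set r := rep M b q₀ with hr
      have hsimr : M.sim b r q₀ := sim_rep M b q₀
      have hq₀lfp : q₀ ∈ Lfp M b P := by
        rw [lfp_eq]
        exact simCl_approx M b P _ q q₀ hsim (by rw [← lfp_eq]; exact hq)
      have hrlfp : r ∈ Lfp M b P := by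
        rw [lfp_eq]
        exact simCl_approx M b P _ q₀ r ((M.sim_equiv b).symm hsimr)
          (by rw [← lfp_eq]; exact hq₀lfp)
      have hrnk : r ∉ M.Know b P := fun hk => hknow (simCl_know M b P r q₀ hsimr hk)
      have hH : H M b P r := h_holds M b P hrlfp hrnk
      set s' := chosen M b P r with hs'def
      have hs'ir : M.IsIrStrat {b} s' := chosen_irStrat M b P r
      set β := hH.choose with hβdef
      have hβlt : β < rank M b P r := hH.choose_spec.1
      have hspec := chosen_spec M b P hH
      -- build the extension path
      let prof : M.St → M.Agt → M.Act :=
        fun x c => if c = b then s' b x else (M.d_ne c x).choose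
      let g : M.St → M.St := fun x => M.o x (prof x)
      have hprofAvail : ∀ x, M.Avail x (prof x) := by
        intro x c
        by_cases hc : c = b
        · subst hc
          simp only [prof, if_pos rfl]
          exact (hs'ir c rfl).1 x
        · simp only [prof, if_neg hc]
          exact (M.d_ne c x).choose_spec
      let lam' : ℕ → M.St := extPath M g q₀ (lam 1)
      have hlam'out : M.InOut {b} s' q₀ lam' := by
        refine ⟨rfl, ?_⟩
        intro i
        match i with
        | 0 =>
          obtain ⟨α₀, hav, hagree, hnext⟩ := hstep 0
          refine ⟨α₀, by rw [show lam' 0 = q₀ from rfl]; exact h0 ▸ hav, ?_, ?_⟩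
          · rintro c rfl
            have := hagree c rfl
            rw [h0] at this
            show α₀ c = s' c q₀
            rw [this]
            show sGlobal M c P c q₀ = s' c q₀
            rfl
          · show lam 1 = M.o q₀ α₀
            rw [hnext, h0]
        | (i + 1) =>
          refine ⟨prof (lam' (i + 1)), hprofAvail _, ?_, rfl⟩
          rintro c rfl
          simp only [prof, if_pos rfl]
      have hlam1 : lam 1 ∈ approx M b P β :=
        hspec lam' ⟨b, rfl, q₀, hsimr, hlam'out⟩
      have hβbig : β ≤ bigOrd M := le_of_lt (lt_of_lt_of_le hβlt (rank_le_bigOrd M b P hrlfp))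
      have hlam1lfp : lam 1 ∈ Lfp M b P := approx_subset_lfp M b P hβbig hlam1
      have hlam1rk : rank M b P (lam 1) ≤ β := rank_le M b P hlam1
      have hβα : β < α := by
        calc β < rank M b P r := hβlt
          _ = rank M b P q₀ := rank_inv M b P hsimr
          _ = rank M b P q := (rank_inv M b P hsim).symm
          _ ≤ α := hrk
      -- apply the inductive hypothesis to the shifted path
      have hshift : M.InOutIr {b} (sGlobal M b P) (lam 1) (fun i => lam (i + 1)) :=
        ⟨b, rfl, lam 1, (M.sim_equiv b).refl _, rfl, fun i => hstep (i + 1)⟩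
      obtain ⟨i, hi⟩ := IH β hβα (lam 1) hlam1lfp hlam1rk _ hshift
      exact ⟨i + 1, hi⟩

end SFLBAux

/-- singleton-coalition lower bound: `μX.(K_a P ∪ ⟨{a}⟩X)` implies
`⟨⟨{a}⟩⟩◇P`. -/
theorem singleton_fixpoint_lower_bound (M : CEGS) (a : M.Agt) (P : Set M.St) (q : M.St)
    (h : q ∈ lfpSet (fun X => M.Know a P ∪ M.Next {a} X)) :
    M.CanReach {a} P q :=
  ⟨SFLBAux.sGlobal M a P, SFLBAux.sGlobal_irStrat M a P,
    fun lam hlam => SFLBAux.main M a P (SFLBAux.rank M a P q) q h le_rfl lam hlam⟩
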